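/- Let δ > 0, let s be a permutation of {1,…,g}, and let r, r′ be integers with 1 ≤ r′ ≤ g+1, r ∈ {r′−1, r′} and 0 ≤ r ≤ g, and set m = 𝕀_{s(1)} + ⋯ + 𝕀_{s(r)}. If Z ∈ D_m, then Θ̃(Z − δ r′ e_1) = Θ(Z) − (δ/2) r′(r′ − 1). -/

import Mathlib

open Matrix Finset

noncomputable section

namespace TropToda

variable (g : ℕ)

/-- The summand `(1/2) m K mᵀ + m Zᵀ` in the definition of the tropical theta function. -/
def thetaTerm (K : Matrix (Fin g) (Fin g) ℝ) (m : Fin g → ℤ) (Z : Fin g → ℝ) : ℝ :=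
  (1/2) * (Matrix.vecMul (fun i => (m i : ℝ)) K ⬝ᵥ fun i => (m i : ℝ))
    + (fun i => (m i : ℝ)) ⬝ᵥ Z

/-- The tropical Riemann theta function associated with `K`. -/
def theta (K : Matrix (Fin g) (Fin g) ℝ) (Z : Fin g → ℝ) : ℝ :=
  sInf (Set.range fun m : Fin g → ℤ => thetaTerm g K m Z)

/-- The fundamental region `D_m`. -/
def Dset (K : Matrix (Fin g) (Fin g) ℝ) (m : Fin g → ℤ) : Set (Fin g → ℝ) :=
  {Z | theta g K Z = thetaTerm g K m Z}

/-- The generic condition on `C = (C_{-1}, C_0, …, C_g)`. -/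
def Generic (C : ℤ → ℝ) : Prop :=
  C (-1) > 2 * C 0 ∧
  (∀ i : ℤ, 0 ≤ i → i ≤ (g : ℤ) - 2 → C i + C (i + 2) > 2 * C (i + 1)) ∧
  C ((g : ℤ) - 1) > 2 * C (g : ℤ)

/-- `L = C_{-1} − 2(g+1) C_g`. -/
def Lc (C : ℤ → ℝ) : ℝ := C (-1) - 2 * (g + 1) * C (g : ℤ)

/-- `λ_0 = C_g`, `λ_i = C_{g−i} − C_{g−i+1}` for `1 ≤ i ≤ g`. -/
def lam (C : ℤ → ℝ) (i : ℕ) : ℝ :=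
  if i = 0 then C (g : ℤ) else C ((g : ℤ) - i) - C ((g : ℤ) - i + 1)

/-- `p_0 = L`, `p_i = L − 2 ∑_{j=1}^g min(λ_i − λ_0, λ_j − λ_0)`. -/
def pc (C : ℤ → ℝ) (i : ℕ) : ℝ :=
  if i = 0 then Lc g C
  else Lc g C - 2 * ∑ j ∈ Finset.Icc 1 g,
    min (lam g C i - lam g C 0) (lam g C j - lam g C 0)

/-- The tridiagonal period matrix `K` (0-based index `a` corresponds to the paper's `a+1`). -/
def Kmat (C : ℤ → ℝ) : Matrix (Fin g) (Fin g) ℝ := fun a b =>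
  if a = b then
    pc g C (a : ℕ) + pc g C ((a : ℕ) + 1) + 2 * (lam g C ((a : ℕ) + 1) - lam g C (a : ℕ))
  else if (a : ℕ) + 1 = (b : ℕ) then -(pc g C ((a : ℕ) + 1))
  else if (b : ℕ) + 1 = (a : ℕ) then -(pc g C ((b : ℕ) + 1))
  else 0

/-- The first standard basis (row) vector `e_1`. -/
def e1 : Fin g → ℝ := fun i => if (i : ℕ) = 0 then 1 else 0

/-- `λ⃗ = (λ_1 − λ_0, …, λ_g − λ_{g−1})`. -/
def lamvec (C : ℤ → ℝ) : Fin g → ℝ := fun i => lam g C ((i : ℕ) + 1) - lam g C (i : ℕ)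

/-- `Z_n^t = Z_0 − nL e_1 + t λ⃗`. -/
def Zpt (C : ℤ → ℝ) (Z0 : Fin g → ℝ) (n t : ℤ) : Fin g → ℝ :=
  fun i => Z0 i - (n : ℝ) * Lc g C * e1 g i + (t : ℝ) * lamvec g C i

/-- `T_n^t = Θ(Z_n^t)`. -/
def Tf (C : ℤ → ℝ) (Z0 : Fin g → ℝ) (n t : ℤ) : ℝ :=
  theta g (Kmat g C) (Zpt g C Z0 n t)

/-- `Q_n^t = T_{n−1}^t + T_n^{t+1} − T_{n−1}^{t+1} − T_n^t + C_g`. -/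
def Qf (C : ℤ → ℝ) (Z0 : Fin g → ℝ) (n t : ℤ) : ℝ :=
  Tf g C Z0 (n - 1) t + Tf g C Z0 n (t + 1) - Tf g C Z0 (n - 1) (t + 1)
    - Tf g C Z0 n t + C (g : ℤ)

/-- `W_n^t = L + T_{n−1}^{t+1} + T_{n+1}^t − T_n^t − T_n^{t+1} + C_g`. -/
def Wf (C : ℤ → ℝ) (Z0 : Fin g → ℝ) (n t : ℤ) : ℝ :=
  Lc g C + Tf g C Z0 (n - 1) (t + 1) + Tf g C Z0 (n + 1) t - Tf g C Z0 n t
    - Tf g C Z0 n (t + 1) + C (g : ℤ)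

/-- `σ_t ∘ ι_t : ℝ^g → ℝ^{2(g+1)}`, recording `(Q_n^t, W_n^t)_{n ∈ ℤ/(g+1)ℤ}`. -/
def sigmaIota (C : ℤ → ℝ) (t : ℤ) (Z0 : Fin g → ℝ) :
    (ZMod (g + 1) → ℝ) × (ZMod (g + 1) → ℝ) :=
  (fun n => Qf g C Z0 (n.val : ℤ) t, fun n => Wf g C Z0 (n.val : ℤ) t)

/-- The tridiagonal matrix `J` with `2` on the diagonal and `−1` off it. -/
def Jmat : Matrix (Fin g) (Fin g) ℝ := fun a b =>
  if a = b then 2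
  else if (a : ℕ) + 1 = (b : ℕ) then -1
  else if (b : ℕ) + 1 = (a : ℕ) then -1
  else 0

/-- `X_n = min_{k=0,…,g} ∑_{l=1}^k (W_{n−l} − Q_{n−l})`, indices mod `g+1`. -/
def todaX (Q W : ZMod (g + 1) → ℝ) (n : ZMod (g + 1)) : ℝ :=
  ⨅ k : Fin (g + 1), ∑ l ∈ Finset.Icc 1 (k : ℕ),
    (W (n - (l : ZMod (g + 1))) - Q (n - (l : ZMod (g + 1))))

/-- The ultra-discrete periodic Toda evolution map. -/
def todaMap (QW : (ZMod (g + 1) → ℝ) × (ZMod (g + 1) → ℝ)) :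
    (ZMod (g + 1) → ℝ) × (ZMod (g + 1) → ℝ) :=
  (fun n => min (QW.2 n) (QW.1 n - todaX g QW.1 QW.2 n),
   fun n => QW.1 (n + 1) + QW.2 n - min (QW.2 n) (QW.1 n - todaX g QW.1 QW.2 n))

/-- `Z̃_n^t = Z_{n_0}^0 − (n − n_0)(L + δ) e_1 + t λ⃗`. -/
def Ztil (C : ℤ → ℝ) (Z0 : Fin g → ℝ) (n0 : ℤ) (δ : ℝ) (n t : ℤ) : Fin g → ℝ :=
  fun i => Zpt g C Z0 n0 0 i - ((n : ℝ) - (n0 : ℝ)) * (Lc g C + δ) * e1 g i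
    + (t : ℝ) * lamvec g C i

/-- The theta function `Θ̃` associated with `K̃ = K + δJ`. -/
def thetaTil (C : ℤ → ℝ) (δ : ℝ) (Z : Fin g → ℝ) : ℝ :=
  theta g (Kmat g C + δ • Jmat g) Z

/-- `Q̃_n`. -/
def Qtil (C : ℤ → ℝ) (Z0 : Fin g → ℝ) (n0 : ℤ) (δ : ℝ) (n : ℤ) : ℝ :=
  thetaTil g C δ (Ztil g C Z0 n0 δ (n - 1) 0) + thetaTil g C δ (Ztil g C Z0 n0 δ n 1)
    - thetaTil g C δ (Ztil g C Z0 n0 δ (n - 1) 1) - thetaTil g C δ (Ztil g C Z0 n0 δ n 0)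

/-- `W̃_n`. -/
def Wtil (C : ℤ → ℝ) (Z0 : Fin g → ℝ) (n0 : ℤ) (δ : ℝ) (n : ℤ) : ℝ :=
  (Lc g C + δ) + thetaTil g C δ (Ztil g C Z0 n0 δ (n - 1) 1)
    + thetaTil g C δ (Ztil g C Z0 n0 δ (n + 1) 0)
    - thetaTil g C δ (Ztil g C Z0 n0 δ n 0) - thetaTil g C δ (Ztil g C Z0 n0 δ n 1)

end TropToda

namespace TTAux


variable {g : ℕ}

def ext (g : ℕ) (v : Fin g → ℝ) (k : ℕ) : ℝ := if h : k < g then v ⟨k, h⟩ else 0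

lemma ext_coe (v : Fin g → ℝ) (b : Fin g) : ext g v (b : ℕ) = v b := by
  simp [ext, b.isLt]

lemma ext_of_ge (v : Fin g → ℝ) {k : ℕ} (h : g ≤ k) : ext g v k = 0 := dif_neg (by omega)

lemma sum_shift (f : ℕ → ℝ) (n : ℕ) :
    ∑ k ∈ range n, f (k+1) = ∑ k ∈ range n, f k + f n - f 0 := by
  have h1 := Finset.sum_range_succ' f n
  have h2 := Finset.sum_range_succ f n
  linarith [h1, h2]

lemma sum_dite_next (n : ℕ) (f : Fin g → ℝ) :
    (∑ b : Fin g, if n = (b : ℕ) then f b else 0)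
      = if h : n < g then f ⟨n, h⟩ else 0 := by
  by_cases h : n < g
  · rw [dif_pos h, Finset.sum_eq_single ⟨n, h⟩]
    · simp
    · intro b _ hb
      rw [if_neg]
      intro hnb
      exact hb (Fin.ext (by simpa using hnb.symm))
    · intro hmem; exact absurd (Finset.mem_univ _) hmem
  · rw [dif_neg h]
    apply Finset.sum_eq_zero
    intro b _
    rw [if_neg]
    intro hnb
    exact h (hnb ▸ b.isLt)

lemma tri_form (D E : ℕ → ℝ) (M : Matrix (Fin g) (Fin g) ℝ)
    (hM : ∀ a b : Fin g, M a b = if a = b then D (a:ℕ)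
      else if (a:ℕ)+1 = (b:ℕ) then E ((a:ℕ)+1)
      else if (b:ℕ)+1 = (a:ℕ) then E ((b:ℕ)+1) else 0)
    (v : Fin g → ℝ) :
    Matrix.vecMul v M ⬝ᵥ v
      = ∑ k ∈ range g, D k * (ext g v k)^2
        + 2 * ∑ k ∈ range g, E (k+1) * (ext g v k * ext g v (k+1)) := by
  have hsplit : ∀ a b : Fin g, v a * M a b * v b =
      (if a = b then D (a:ℕ) * (v a)^2 else 0)
      + ((if (a:ℕ)+1 = (b:ℕ) then E ((a:ℕ)+1) * (v a * v b) else 0)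
        + (if (b:ℕ)+1 = (a:ℕ) then E ((b:ℕ)+1) * (v a * v b) else 0)) := by
    intro a b
    rw [hM a b]
    by_cases h1 : a = b
    · subst h1
      rw [if_pos rfl, if_pos rfl]
      ring_nf
      rw [if_neg (show ¬(1 + (a:ℕ) = (a:ℕ)) by omega)]
      ring
    · rw [if_neg h1, if_neg h1]
      by_cases h2 : (a:ℕ)+1 = (b:ℕ)
      · rw [if_pos h2, if_pos h2, if_neg (show ¬((b:ℕ)+1 = (a:ℕ)) by omega)]; ring
      · rw [if_neg h2, if_neg h2]
        by_cases h3 : (b:ℕ)+1 = (a:ℕ)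
        · rw [if_pos h3, if_pos h3]; ring
        · rw [if_neg h3, if_neg h3]; ring
  have expand : Matrix.vecMul v M ⬝ᵥ v = ∑ a : Fin g, ∑ b : Fin g, v a * M a b * v b := by
    simp only [Matrix.vecMul, dotProduct, Finset.sum_mul]
    rw [Finset.sum_comm]
  rw [expand]
  simp only [hsplit, Finset.sum_add_distrib]
  congr 1
  · have h1 : ∀ a : Fin g, (∑ b : Fin g, if a = b then D (a:ℕ) * (v a)^2 else 0)
        = D (a:ℕ) * (ext g v (a:ℕ))^2 := by
      intro a
      rw [Finset.sum_ite_eq univ a (fun _ => D (a:ℕ) * (v a)^2)]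
      simp [ext_coe]
    rw [← Fin.sum_univ_eq_sum_range (fun k => D k * (ext g v k)^2) g]
    exact Finset.sum_congr rfl fun a _ => h1 a
  · have h2 : ∀ a : Fin g, (∑ b : Fin g, if (a:ℕ)+1 = (b:ℕ) then E ((a:ℕ)+1) * (v a * v b) else 0)
        = E ((a:ℕ)+1) * (ext g v (a:ℕ) * ext g v ((a:ℕ)+1)) := by
      intro a
      rw [sum_dite_next ((a:ℕ)+1) (fun b => E ((a:ℕ)+1) * (v a * v b))]
      by_cases h : (a:ℕ)+1 < g
      · rw [dif_pos h, ext_coe]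
        have : ext g v ((a:ℕ)+1) = v ⟨(a:ℕ)+1, h⟩ := dif_pos h
        rw [this]
      · rw [dif_neg h, ext_of_ge (k := (a:ℕ)+1) v (by omega), ext_coe]; ring
    have h3 : ∀ b : Fin g, (∑ a : Fin g, if (b:ℕ)+1 = (a:ℕ) then E ((b:ℕ)+1) * (v a * v b) else 0)
        = E ((b:ℕ)+1) * (ext g v (b:ℕ) * ext g v ((b:ℕ)+1)) := by
      intro b
      rw [sum_dite_next ((b:ℕ)+1) (fun a => E ((b:ℕ)+1) * (v a * v b))]
      by_cases h : (b:ℕ)+1 < g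
      · rw [dif_pos h, ext_coe]
        have : ext g v ((b:ℕ)+1) = v ⟨(b:ℕ)+1, h⟩ := dif_pos h
        rw [this]; ring
      · rw [dif_neg h, ext_of_ge (k := (b:ℕ)+1) v (by omega), ext_coe]; ring
    have conv2 : (∑ a : Fin g, ∑ b : Fin g, if (a:ℕ)+1 = (b:ℕ) then E ((a:ℕ)+1) * (v a * v b) else 0)
        = ∑ k ∈ range g, E (k+1) * (ext g v k * ext g v (k+1)) := by
      rw [← Fin.sum_univ_eq_sum_range (fun k => E (k+1) * (ext g v k * ext g v (k+1))) g]
      exact Finset.sum_congr rfl fun a _ => h2 a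
    have conv3 : (∑ a : Fin g, ∑ b : Fin g, if (b:ℕ)+1 = (a:ℕ) then E ((b:ℕ)+1) * (v a * v b) else 0)
        = ∑ k ∈ range g, E (k+1) * (ext g v k * ext g v (k+1)) := by
      rw [Finset.sum_comm,
        ← Fin.sum_univ_eq_sum_range (fun k => E (k+1) * (ext g v k * ext g v (k+1))) g]
      exact Finset.sum_congr rfl fun b _ => h3 b
    rw [conv2, conv3]; ring


open TropToda

lemma J_form (v : Fin g → ℝ) :
    Matrix.vecMul v (TropToda.Jmat g) ⬝ᵥ v
      = (ext g v 0)^2 + ∑ k ∈ range g, (ext g v k - ext g v (k+1))^2 := by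
  rw [tri_form (fun _ => 2) (fun _ => -1) (TropToda.Jmat g) (fun a b => rfl) v]
  have e1 : ∑ k ∈ range g, (ext g v k - ext g v (k+1))^2
      = ∑ k ∈ range g, ((ext g v k)^2 - 2*(ext g v k * ext g v (k+1)) + (ext g v (k+1))^2) :=
    Finset.sum_congr rfl (fun k _ => by ring)
  have e2 : ∑ k ∈ range g, (ext g v (k+1))^2
      = ∑ k ∈ range g, (ext g v k)^2 + (ext g v g)^2 - (ext g v 0)^2 :=
    sum_shift (fun k => (ext g v k)^2) g
  have e3 : ∑ k ∈ range g, ((ext g v k)^2 - 2*(ext g v k * ext g v (k+1)) + (ext g v (k+1))^2)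
      = ∑ k ∈ range g, (ext g v k)^2 - 2*∑ k ∈ range g, (ext g v k * ext g v (k+1))
        + ∑ k ∈ range g, (ext g v (k+1))^2 := by
    rw [Finset.sum_add_distrib, Finset.sum_sub_distrib, ← Finset.mul_sum]
  have e4 : ∑ k ∈ range g, (2:ℝ) * (ext g v k)^2 = 2 * ∑ k ∈ range g, (ext g v k)^2 :=
    (Finset.mul_sum _ _ _).symm
  have e5 : ∑ k ∈ range g, (-1:ℝ) * (ext g v k * ext g v (k+1))
      = -∑ k ∈ range g, (ext g v k * ext g v (k+1)) := by
    rw [← Finset.sum_neg_distrib]; exact Finset.sum_congr rfl (fun k _ => by ring)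
  have hg0 : ext g v g = 0 := ext_of_ge v le_rfl
  rw [e1, e3, e2, hg0, e4, e5]
  ring

lemma K_lb (C : ℤ → ℝ) (hpc : ∀ k, k ≤ g → 0 ≤ pc g C k)
    (hd : ∀ k, k < g → 0 < lam g C (k+1) - lam g C k)
    (n : Fin g → ℤ) (Z : Fin g → ℝ) :
    ∑ k ∈ range g, -(ext g Z k)^2 / (4*(lam g C (k+1) - lam g C k))
      ≤ thetaTerm g (Kmat g C) n Z := by
  have hquad : Matrix.vecMul (fun i => (n i:ℝ)) (Kmat g C) ⬝ᵥ (fun i => (n i:ℝ))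
      = ∑ k ∈ range g, (pc g C k + pc g C (k+1) + 2*(lam g C (k+1) - lam g C k))
            * (ext g (fun i => (n i:ℝ)) k)^2
        + 2 * ∑ k ∈ range g, (-(pc g C (k+1)))
            * (ext g (fun i => (n i:ℝ)) k * ext g (fun i => (n i:ℝ)) (k+1)) :=
    tri_form (fun k => pc g C k + pc g C (k+1) + 2*(lam g C (k+1) - lam g C k))
      (fun k => -(pc g C k)) (Kmat g C) (fun a b => rfl) _
  set x : ℕ → ℝ := ext g (fun i => (n i:ℝ)) with hxdef
  set z : ℕ → ℝ := ext g Z with hzdef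
  have hdot : (fun i => (n i:ℝ)) ⬝ᵥ Z = ∑ k ∈ range g, x k * z k := by
    rw [dotProduct, ← Fin.sum_univ_eq_sum_range (fun k => x k * z k) g]
    exact Finset.sum_congr rfl fun i _ => by rw [hxdef, hzdef, ext_coe, ext_coe]
  have hterm : thetaTerm g (Kmat g C) n Z
      = (1/2) * (∑ k ∈ range g, (pc g C k + pc g C (k+1) + 2*(lam g C (k+1) - lam g C k)) * (x k)^2
          + 2 * ∑ k ∈ range g, (-(pc g C (k+1))) * (x k * x (k+1)))
        + ∑ k ∈ range g, x k * z k := by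
    rw [thetaTerm, hquad, hdot]
  have hA : ∑ k ∈ range g, (pc g C (k+1)) * (2*(x k * x (k+1)))
      ≤ ∑ k ∈ range g, (pc g C (k+1)) * ((x k)^2 + (x (k+1))^2) := by
    apply Finset.sum_le_sum; intro k hk
    have hk' : k + 1 ≤ g := by have := Finset.mem_range.mp hk; omega
    have hp := hpc (k+1) hk'
    nlinarith [sq_nonneg (x k - x (k+1))]
  have hB : ∑ k ∈ range g, (pc g C (k+1)) * (x (k+1))^2
      = ∑ k ∈ range g, (pc g C k) * (x k)^2 + (pc g C g) * (x g)^2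
        - (pc g C 0) * (x 0)^2 :=
    sum_shift (fun k => (pc g C k) * (x k)^2) g
  have hxg : x g = 0 := ext_of_ge _ le_rfl
  have h0 : 0 ≤ (pc g C 0) * (x 0)^2 := mul_nonneg (hpc 0 (Nat.zero_le g)) (sq_nonneg _)
  have hsplit1 : ∑ k ∈ range g, (pc g C k + pc g C (k+1) + 2*(lam g C (k+1) - lam g C k)) * (x k)^2
      = ∑ k ∈ range g, (pc g C k) * (x k)^2 + ∑ k ∈ range g, (pc g C (k+1)) * (x k)^2
        + ∑ k ∈ range g, 2*(lam g C (k+1) - lam g C k) * (x k)^2 := by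
    rw [← Finset.sum_add_distrib, ← Finset.sum_add_distrib]
    exact Finset.sum_congr rfl fun k _ => by ring
  have hsplit2 : ∑ k ∈ range g, (pc g C (k+1)) * ((x k)^2 + (x (k+1))^2)
      = ∑ k ∈ range g, (pc g C (k+1)) * (x k)^2 + ∑ k ∈ range g, (pc g C (k+1)) * (x (k+1))^2 := by
    rw [← Finset.sum_add_distrib]
    exact Finset.sum_congr rfl fun k _ => by ring
  have h2sum : 2 * ∑ k ∈ range g, (-(pc g C (k+1))) * (x k * x (k+1))
      = - ∑ k ∈ range g, (pc g C (k+1)) * (2*(x k * x (k+1))) := by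
    rw [Finset.mul_sum, ← Finset.sum_neg_distrib]
    exact Finset.sum_congr rfl fun k _ => by ring
  have hDsum : ∑ k ∈ range g, 2*(lam g C (k+1) - lam g C k) * (x k)^2
      = 2 * ∑ k ∈ range g, (lam g C (k+1) - lam g C k) * (x k)^2 := by
    rw [Finset.mul_sum]
    exact Finset.sum_congr rfl fun k _ => by ring
  have hfinal : ∑ k ∈ range g, -(z k)^2 / (4*(lam g C (k+1) - lam g C k))
      ≤ ∑ k ∈ range g, ((lam g C (k+1) - lam g C k) * (x k)^2 + x k * z k) := by
    apply Finset.sum_le_sum; intro k hk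
    have hdk := hd k (Finset.mem_range.mp hk)
    rw [div_le_iff₀ (by linarith)]
    nlinarith [sq_nonneg (2*(lam g C (k+1) - lam g C k) * x k + z k)]
  have hfs : ∑ k ∈ range g, ((lam g C (k+1) - lam g C k) * (x k)^2 + x k * z k)
      = ∑ k ∈ range g, (lam g C (k+1) - lam g C k) * (x k)^2 + ∑ k ∈ range g, x k * z k :=
    Finset.sum_add_distrib
  have hzero : (pc g C g) * (x g)^2 = 0 := by rw [hxg]; ring
  rw [hterm]
  linarith [hsplit1, hsplit2, h2sum, hA, hB, hzero, h0, hfinal, hfs, hDsum]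

lemma lam_gap_pos (C : ℤ → ℝ) (hC : Generic g C) :
    ∀ k, k < g → 0 < lam g C (k+1) - lam g C k := by
  intro k hk
  rcases Nat.eq_zero_or_pos k with h0 | h1
  · subst h0
    have h := hC.2.2
    have e1 : lam g C 1 = C ((g:ℤ) - 1) - C ((g:ℤ) - 1 + 1) := by
      rw [lam, if_neg one_ne_zero]; norm_num
    have e0 : lam g C 0 = C (g:ℤ) := by rw [lam, if_pos rfl]
    have a2 : (g:ℤ) - 1 + 1 = (g:ℤ) := by ring
    rw [e1, e0, a2]
    linarith
  · have h := hC.2.1 ((g:ℤ) - k - 1) (by omega) (by omega)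
    have e1 : lam g C (k+1) = C ((g:ℤ) - k - 1) - C ((g:ℤ) - k - 1 + 1) := by
      rw [lam, if_neg (Nat.succ_ne_zero k)]
      have a : (g:ℤ) - ((k:ℕ)+1 : ℕ) = (g:ℤ) - k - 1 := by push_cast; ring
      rw [a]
    have e2 : lam g C k = C ((g:ℤ) - k) - C ((g:ℤ) - k + 1) := by
      rw [lam, if_neg (by omega)]
    have a1 : (g:ℤ) - k - 1 + 2 = (g:ℤ) - k + 1 := by ring
    have a2 : (g:ℤ) - k - 1 + 1 = (g:ℤ) - k := by ring
    rw [a1, a2] at h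
    rw [e1, e2, a2]
    linarith

lemma lam_mono (C : ℤ → ℝ) (hC : Generic g C) :
    ∀ j, j ≤ g → lam g C 0 ≤ lam g C j := by
  intro j
  induction j with
  | zero => intro _; exact le_refl _
  | succ i ih =>
    intro h
    have h1 := ih (by omega)
    have h2 := lam_gap_pos C hC i (by omega)
    linarith

lemma sum_lam (C : ℤ → ℝ) : ∑ j ∈ Icc 1 g, lam g C j = C 0 - C (g:ℤ) := by
  rw [← Finset.Ico_add_one_right_eq_Icc, Finset.sum_Ico_eq_sum_range]
  have hcard : g + 1 - 1 = g := by omega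
  rw [hcard]
  have hterm : ∀ i ∈ range g, lam g C (1+i)
      = (fun t : ℕ => C ((g:ℤ) - t)) (i+1) - (fun t : ℕ => C ((g:ℤ) - t)) i := by
    intro i _
    simp only []
    rw [lam, if_neg (by omega)]
    have a1 : (g:ℤ) - ((1+i : ℕ) : ℤ) = (g:ℤ) - ((i+1 : ℕ) : ℤ) := by push_cast; ring
    have a2 : (g:ℤ) - ((1+i : ℕ) : ℤ) + 1 = (g:ℤ) - (i : ℤ) := by push_cast; ring
    have a3 : (g:ℤ) - ((i+1 : ℕ) : ℤ) + 1 = (g:ℤ) - (i : ℤ) := by push_cast; ring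
    rw [a1, a3]
  rw [Finset.sum_congr rfl hterm, Finset.sum_range_sub (fun t : ℕ => C ((g:ℤ) - t)) g]
  simp

lemma pc_pos (C : ℤ → ℝ) (hC : Generic g C) : ∀ k, k ≤ g → 0 < pc g C k := by
  have hlam0 : lam g C 0 = C (g:ℤ) := by rw [lam, if_pos rfl]
  have hS : ∑ j ∈ Icc 1 g, (lam g C j - lam g C 0)
      = C 0 - C (g:ℤ) - (g:ℝ) * C (g:ℤ) := by
    rw [Finset.sum_sub_distrib, sum_lam, Finset.sum_const, Nat.card_Icc]
    rw [hlam0]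
    have : g + 1 - 1 = g := by omega
    rw [this, nsmul_eq_mul]
  have hS0 : 0 ≤ ∑ j ∈ Icc 1 g, (lam g C j - lam g C 0) := by
    apply Finset.sum_nonneg
    intro j hj
    have := lam_mono C hC j (Finset.mem_Icc.mp hj).2
    linarith
  have hLc : Lc g C = C (-1) - 2*((g:ℝ)+1)*C (g:ℤ) := by rw [Lc]
  have hkey : Lc g C - 2 * ∑ j ∈ Icc 1 g, (lam g C j - lam g C 0) = C (-1) - 2 * C 0 := by
    rw [hS, hLc]; ring
  have h1 := hC.1
  intro k hk
  rcases Nat.eq_zero_or_pos k with h0 | hpos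
  · subst h0
    rw [pc, if_pos rfl]
    linarith
  · rw [pc, if_neg (by omega)]
    have hmin : ∑ j ∈ Icc 1 g, min (lam g C k - lam g C 0) (lam g C j - lam g C 0)
        ≤ ∑ j ∈ Icc 1 g, (lam g C j - lam g C 0) :=
      Finset.sum_le_sum fun j _ => min_le_right _ _
    linarith

lemma theta_le (C : ℤ → ℝ) (hC : Generic g C) (Z : Fin g → ℝ) (n : Fin g → ℤ) :
    theta g (Kmat g C) Z ≤ thetaTerm g (Kmat g C) n Z := by
  apply csInf_le
  · refine ⟨∑ k ∈ range g, -(ext g Z k)^2 / (4*(lam g C (k+1) - lam g C k)), ?_⟩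
    rintro y ⟨n', rfl⟩
    exact K_lb C (fun k hk => (pc_pos C hC k hk).le) (lam_gap_pos C hC) n' Z
  · exact ⟨n, rfl⟩

def extZ (g : ℕ) (n : Fin g → ℤ) (k : ℕ) : ℤ := if h : k < g then n ⟨k, h⟩ else 0

lemma extZ_cast (n : Fin g → ℤ) (k : ℕ) :
    ext g (fun i => (n i : ℝ)) k = ((extZ g n k : ℤ) : ℝ) := by
  rw [ext, extZ]; split <;> simp

def JqZ (g : ℕ) (n : Fin g → ℤ) : ℤ :=
  (extZ g n 0)^2 + ∑ k ∈ range g, (extZ g n k - extZ g n (k+1))^2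

lemma J_form_int (n : Fin g → ℤ) :
    Matrix.vecMul (fun i => (n i:ℝ)) (Jmat g) ⬝ᵥ (fun i => (n i:ℝ)) = ((JqZ g n : ℤ) : ℝ) := by
  rw [J_form, JqZ]
  simp only [extZ_cast]
  push_cast
  ring

lemma extZ_top (n : Fin g → ℤ) : extZ g n g = 0 := dif_neg (lt_irrefl g)

lemma extZ_sum (n : Fin g → ℤ) :
    ∑ k ∈ range g, (extZ g n k - extZ g n (k+1)) = extZ g n 0 := by
  rw [Finset.sum_range_sub' (fun k => extZ g n k) g, extZ_top]
  ring

lemma JqZ_ge (n : Fin g → ℤ) (r' : ℤ) :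
    2 * r' * extZ g n 0 - r' * (r' - 1) ≤ JqZ g n := by
  have hd : ∀ k ∈ range g, (extZ g n k - extZ g n (k+1)) ≤ (extZ g n k - extZ g n (k+1))^2 := by
    intro k _
    rcases le_or_gt (extZ g n k - extZ g n (k+1)) 0 with h | h
    · nlinarith [sq_nonneg (extZ g n k - extZ g n (k+1))]
    · nlinarith
  have h1 : extZ g n 0 ≤ ∑ k ∈ range g, (extZ g n k - extZ g n (k+1))^2 := by
    calc extZ g n 0 = ∑ k ∈ range g, (extZ g n k - extZ g n (k+1)) := (extZ_sum n).symm
      _ ≤ _ := Finset.sum_le_sum hd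
  have h2 : 0 ≤ (extZ g n 0 - r') * (extZ g n 0 - r' + 1) := by
    rcases le_or_gt (extZ g n 0 - r' + 1) 0 with h | h
    · nlinarith
    · have h' : 0 ≤ extZ g n 0 - r' := by omega
      nlinarith
  rw [JqZ]
  nlinarith [h1, h2]

lemma card_filter_lt_fin (t : ℕ) (ht : t ≤ g) :
    (Finset.univ.filter fun j : Fin g => (j:ℕ) < t).card = t := by
  rw [Finset.card_filter]
  rw [Fin.sum_univ_eq_sum_range (fun k => if k < t then 1 else 0) g]
  rw [← Finset.card_filter]
  have h : ((range g).filter (· < t)) = range t := by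
    ext x; simp; omega
  rw [h, Finset.card_range]

lemma JqZ_m (hg : 0 < g) (s : Equiv.Perm (Fin g)) (r : ℤ) (hr0 : 0 ≤ r) (hrg : r ≤ (g:ℤ))
    (m : Fin g → ℤ)
    (hm : m = fun i : Fin g =>
      ((Finset.univ.filter fun j : Fin g => ((j : ℕ) : ℤ) < r ∧ (i : ℕ) ≤ ((s j : Fin g) : ℕ)).card : ℤ)) :
    extZ g m 0 = r ∧ JqZ g m = r^2 + r := by
  have h0 : extZ g m 0 = r := by
    rw [extZ, dif_pos hg, hm]
    have he : (Finset.univ.filter fun j : Fin g =>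
        ((j : ℕ) : ℤ) < r ∧ (((⟨0, hg⟩ : Fin g) : Fin g) : ℕ) ≤ ((s j : Fin g) : ℕ))
        = (Finset.univ.filter fun j : Fin g => (j:ℕ) < r.toNat) := by
      apply Finset.filter_congr
      intro j _
      simp only [Fin.val_mk]
      constructor
      · intro hj; omega
      · intro hj; exact ⟨by omega, by omega⟩
    simp only []
    rw [he, card_filter_lt_fin r.toNat (by omega)]
    omega
  refine ⟨h0, ?_⟩
  have hdk : ∀ k (hk : k < g), extZ g m k - extZ g m (k+1)
      = ((Finset.univ.filter fun j : Fin g =>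
          ((j : ℕ) : ℤ) < r ∧ ((s j : Fin g) : ℕ) = k).card : ℤ) := by
    intro k hk
    by_cases hk1 : k + 1 < g
    · rw [extZ, dif_pos hk, extZ, dif_pos hk1, hm]
      simp only []
      have hunion : (Finset.univ.filter fun j : Fin g =>
            ((j : ℕ) : ℤ) < r ∧ (((⟨k, hk⟩ : Fin g)) : ℕ) ≤ ((s j : Fin g) : ℕ))
          = (Finset.univ.filter fun j : Fin g =>
            ((j : ℕ) : ℤ) < r ∧ (((⟨k+1, hk1⟩ : Fin g)) : ℕ) ≤ ((s j : Fin g) : ℕ))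
            ∪ (Finset.univ.filter fun j : Fin g =>
            ((j : ℕ) : ℤ) < r ∧ ((s j : Fin g) : ℕ) = k) := by
        ext j
        simp only [Finset.mem_union, Finset.mem_filter, Finset.mem_univ, true_and, Fin.val_mk]
        omega
      have hdis : Disjoint (Finset.univ.filter fun j : Fin g =>
            ((j : ℕ) : ℤ) < r ∧ (((⟨k+1, hk1⟩ : Fin g)) : ℕ) ≤ ((s j : Fin g) : ℕ))
          (Finset.univ.filter fun j : Fin g =>
            ((j : ℕ) : ℤ) < r ∧ ((s j : Fin g) : ℕ) = k) := by
        rw [Finset.disjoint_left]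
        intro j hj1 hj2
        simp only [Finset.mem_filter, Finset.mem_univ, true_and, Fin.val_mk] at hj1 hj2
        omega
      rw [hunion, Finset.card_union_of_disjoint hdis]
      push_cast
      ring
    · rw [extZ, dif_pos hk, extZ, dif_neg (by omega), hm]
      simp only []
      have he : (Finset.univ.filter fun j : Fin g =>
            ((j : ℕ) : ℤ) < r ∧ (((⟨k, hk⟩ : Fin g)) : ℕ) ≤ ((s j : Fin g) : ℕ))
          = (Finset.univ.filter fun j : Fin g =>
            ((j : ℕ) : ℤ) < r ∧ ((s j : Fin g) : ℕ) = k) := by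
        apply Finset.filter_congr
        intro j _
        have hsj := (s j).isLt
        simp only [Fin.val_mk]
        constructor
        · intro hj; exact ⟨hj.1, by omega⟩
        · intro hj; exact ⟨hj.1, by omega⟩
      rw [he]
      ring
  have hcard1 : ∀ k : ℕ, (Finset.univ.filter fun j : Fin g =>
      ((j : ℕ) : ℤ) < r ∧ ((s j : Fin g) : ℕ) = k).card ≤ 1 := by
    intro k
    apply Finset.card_le_one.mpr
    intro a ha b hb
    simp only [Finset.mem_filter, Finset.mem_univ, true_and] at ha hb
    apply s.injective
    exact Fin.ext (ha.2.trans hb.2.symm)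
  have hsq : ∑ k ∈ range g, (extZ g m k - extZ g m (k+1))^2
      = ∑ k ∈ range g, (extZ g m k - extZ g m (k+1)) := by
    apply Finset.sum_congr rfl
    intro k hk
    rw [hdk k (Finset.mem_range.mp hk)]
    rcases Nat.le_one_iff_eq_zero_or_eq_one.mp (hcard1 k) with h | h <;> rw [h] <;> norm_num
  rw [JqZ, hsq, extZ_sum, h0]

lemma term_expand (hg : 0 < g) (C : ℤ → ℝ) (δ rr : ℝ) (n : Fin g → ℤ) (Z : Fin g → ℝ) :
    thetaTerm g (Kmat g C + δ • Jmat g) n (fun i => Z i - δ * rr * e1 g i)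
      = thetaTerm g (Kmat g C) n Z
        + δ * ((1/2) * ((JqZ g n : ℤ) : ℝ) - rr * ((extZ g n 0 : ℤ) : ℝ)) := by
  rw [thetaTerm, thetaTerm]
  have h1 : Matrix.vecMul (fun i => (n i:ℝ)) (Kmat g C + δ • Jmat g) ⬝ᵥ (fun i => (n i:ℝ))
      = Matrix.vecMul (fun i => (n i:ℝ)) (Kmat g C) ⬝ᵥ (fun i => (n i:ℝ))
        + δ * (Matrix.vecMul (fun i => (n i:ℝ)) (Jmat g) ⬝ᵥ (fun i => (n i:ℝ))) := by
    have hrow : Matrix.vecMul (fun i => (n i:ℝ)) (Kmat g C + δ • Jmat g)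
        = fun b => Matrix.vecMul (fun i => (n i:ℝ)) (Kmat g C) b
          + δ * Matrix.vecMul (fun i => (n i:ℝ)) (Jmat g) b := by
      funext b
      simp only [Matrix.vecMul, dotProduct, Matrix.add_apply, Matrix.smul_apply,
        smul_eq_mul, mul_add, Finset.sum_add_distrib, Finset.mul_sum]
      congr 1
      exact Finset.sum_congr rfl fun a _ => by ring
    rw [hrow]
    simp only [dotProduct, add_mul, Finset.sum_add_distrib, Finset.mul_sum]
    congr 1
    exact Finset.sum_congr rfl fun a _ => by ring
  have he : (fun i => (n i:ℝ)) ⬝ᵥ (e1 g) = ((extZ g n 0 : ℤ) : ℝ) := by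
    rw [dotProduct, Finset.sum_eq_single (⟨0, hg⟩ : Fin g)]
    · rw [extZ, dif_pos hg, e1]
      norm_num
    · intro b _ hb
      have hb0 : (b : ℕ) ≠ 0 := fun h => hb (Fin.ext h)
      rw [e1]
      simp only [if_neg hb0, mul_zero]
    · intro h; exact absurd (Finset.mem_univ _) h
  have h2 : (fun i => (n i:ℝ)) ⬝ᵥ (fun i => Z i - δ * rr * e1 g i)
      = (fun i => (n i:ℝ)) ⬝ᵥ Z - δ * rr * ((extZ g n 0 : ℤ) : ℝ) := by
    rw [show (fun i => Z i - δ * rr * e1 g i) = Z - (δ * rr) • e1 g from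
      funext fun i => by simp [smul_eq_mul]]
    rw [dotProduct_sub, dotProduct_smul, smul_eq_mul, he]
  rw [h1, h2, J_form_int]
  ring

end TTAux

open TropToda in
/-- if `Z ∈ D_m` with `m = 𝕀_{s(1)} + ⋯ + 𝕀_{s(r)}`, then
`Θ̃(Z − δ r′ e_1) = Θ(Z) − (δ/2) r′(r′−1)`. -/
theorem thetaTil_shift
    (g : ℕ) (hg : 0 < g) (C : ℤ → ℝ) (hC : Generic g C)
    (δ : ℝ) (hδ : 0 < δ) (s : Equiv.Perm (Fin g)) (r r' : ℤ)
    (hr'1 : 1 ≤ r') (hr'2 : r' ≤ (g : ℤ) + 1) (hr : r = r' - 1 ∨ r = r')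
    (hr0 : 0 ≤ r) (hrg : r ≤ (g : ℤ))
    (m : Fin g → ℤ)
    (hm : m = fun i : Fin g =>
      ((Finset.univ.filter fun j : Fin g => ((j : ℕ) : ℤ) < r ∧ (i : ℕ) ≤ ((s j : Fin g) : ℕ)).card : ℤ))
    (Z : Fin g → ℝ) (hZ : Z ∈ Dset g (Kmat g C) m) :
    theta g (Kmat g C + δ • Jmat g) (fun i => Z i - δ * (r' : ℝ) * e1 g i)
      = theta g (Kmat g C) Z - (δ / 2) * (r' : ℝ) * ((r' : ℝ) - 1) := by
  have hZeq : theta g (Kmat g C) Z = thetaTerm g (Kmat g C) m Z := hZ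
  have hKle : ∀ n : Fin g → ℤ,
      thetaTerm g (Kmat g C) m Z ≤ thetaTerm g (Kmat g C) n Z := by
    intro n
    calc thetaTerm g (Kmat g C) m Z = theta g (Kmat g C) Z := hZeq.symm
      _ ≤ _ := TTAux.theta_le C hC Z n
  obtain ⟨hm0, hJm⟩ := TTAux.JqZ_m hg s r hr0 hrg m hm
  have hval : δ * ((1/2) * ((TTAux.JqZ g m : ℤ) : ℝ)
        - (r' : ℝ) * ((TTAux.extZ g m 0 : ℤ) : ℝ))
      = -((δ/2) * (r' : ℝ) * ((r' : ℝ) - 1)) := by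
    rw [hJm, hm0]
    rcases hr with h | h <;> subst h <;> push_cast <;> ring
  have hmem : thetaTerm g (Kmat g C + δ • Jmat g) m (fun i => Z i - δ * (r' : ℝ) * e1 g i)
      = thetaTerm g (Kmat g C) m Z - (δ/2) * (r' : ℝ) * ((r' : ℝ) - 1) := by
    rw [TTAux.term_expand hg C δ ((r' : ℝ)) m Z, hval]
    ring
  have hlow : ∀ n : Fin g → ℤ,
      thetaTerm g (Kmat g C) m Z - (δ/2) * (r' : ℝ) * ((r' : ℝ) - 1)
      ≤ thetaTerm g (Kmat g C + δ • Jmat g) n (fun i => Z i - δ * (r' : ℝ) * e1 g i) := by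
    intro n
    rw [TTAux.term_expand hg C δ ((r' : ℝ)) n Z]
    have h1 := hKle n
    have h2 : ((2 * r' * TTAux.extZ g n 0 - r' * (r' - 1) : ℤ) : ℝ)
        ≤ ((TTAux.JqZ g n : ℤ) : ℝ) := Int.cast_le.mpr (TTAux.JqZ_ge n r')
    push_cast at h2
    have h3 : δ * (2 * (r' : ℝ) * ((TTAux.extZ g n 0 : ℤ) : ℝ)
          - (r' : ℝ) * ((r' : ℝ) - 1))
        ≤ δ * ((TTAux.JqZ g n : ℤ) : ℝ) :=
      mul_le_mul_of_nonneg_left h2 hδ.le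
    nlinarith [h1, h3]
  rw [hZeq, theta]
  apply le_antisymm
  · have hb : BddBelow (Set.range fun n : Fin g → ℤ =>
        thetaTerm g (Kmat g C + δ • Jmat g) n (fun i => Z i - δ * (r' : ℝ) * e1 g i)) := by
      refine ⟨thetaTerm g (Kmat g C) m Z - (δ/2) * (r' : ℝ) * ((r' : ℝ) - 1), ?_⟩
      rintro y ⟨n, rfl⟩
      exact hlow n
    have h := csInf_le hb (Set.mem_range_self m)
    rw [hmem] at h
    exact h
  · apply le_csInf (Set.range_nonempty _)
    rintro y ⟨n, rfl⟩
    exact hlow n
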